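/- For every finite partition ℕ = C₁ ⊎ ⋯ ⊎ C_r, at least one part C_i contains a set of finite sums FS((n_k)_{k=1}^∞) of some strictly increasing sequence of natural numbers (Hindman's theorem). -/

import Mathlib

/-- The set of finite sums of a sequence `f`. -/
def FSset (f : ℕ → ℕ) : Set ℕ :=
  {n | ∃ F : Finset ℕ, F.Nonempty ∧ n = ∑ k ∈ F, f k}

/-- Elements of `FS` of the coerced stream come from `FS` of the original `ℕ+` stream. -/
lemma FS_coe_aux (c : Stream' ℕ) (m : ℕ) (h : m ∈ Hindman.FS c) :
    ∀ a : Stream' ℕ+, c = a.map (fun x : ℕ+ => (x : ℕ)) → ∃ p ∈ Hindman.FS a, (p : ℕ) = m := by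
  induction h with
  | head' c' =>
    intro a hc
    subst hc
    exact ⟨a.head, Hindman.FS.head a, (Stream'.head_map _ a).symm⟩
  | tail' c' m' h ih =>
    intro a hc
    subst hc
    obtain ⟨p, hp, hpm⟩ := ih a.tail (Stream'.tail_map _ a)
    exact ⟨p, Hindman.FS.tail a p hp, hpm⟩
  | cons' c' m' h ih =>
    intro a hc
    subst hc
    obtain ⟨p, hp, hpm⟩ := ih a.tail (Stream'.tail_map _ a)
    refine ⟨a.head + p, Hindman.FS.cons a p hp, ?_⟩
    rw [Stream'.head_map]
    push_cast
    rw [hpm]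

/-- Hindman's theorem: for every finite partition of ℕ, some part contains a set of finite
sums of a strictly increasing sequence of natural numbers. -/
theorem hindman (r : ℕ) (C : Fin r → Set ℕ) (hcover : (⋃ i, C i) = Set.univ)
    (hdisj : Pairwise fun i j => Disjoint (C i) (C j)) :
    ∃ i, ∃ f : ℕ → ℕ, StrictMono f ∧ FSset f ⊆ C i := by
  classical
  -- transfer the cover to ℕ+
  set D : Fin r → Set ℕ+ := fun i => {n | (n : ℕ) ∈ C i} with hD
  have hcov' : (⊤ : Set ℕ+) ⊆ ⋃₀ Set.range D := by
    intro n _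
    have : (n : ℕ) ∈ ⋃ i, C i := hcover ▸ Set.mem_univ _
    obtain ⟨i, hi⟩ := Set.mem_iUnion.mp this
    exact ⟨D i, Set.mem_range_self i, hi⟩
  obtain ⟨c, hc, a, ha⟩ := Hindman.exists_FS_of_finite_cover (Set.range D)
    (Set.finite_range D) hcov'
  obtain ⟨i, rfl⟩ := hc
  -- the coerced stream
  set b : ℕ → ℕ := fun k => (a.get k : ℕ) with hb
  have hb1 : ∀ k, 1 ≤ b k := fun k => (a.get k).one_le
  -- key: sums of b over nonempty finsets lie in C i
  have hsum : ∀ F : Finset ℕ, F.Nonempty → (∑ k ∈ F, b k) ∈ C i := by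
    intro F hF
    have hmem : (∑ k ∈ F, b k) ∈ Hindman.FS (a.map (fun x : ℕ+ => (x : ℕ))) := by
      have := Hindman.FS.finset_sum (a.map (fun x : ℕ+ => (x : ℕ))) F hF
      simpa [Stream'.get_map] using this
    obtain ⟨p, hp, hpm⟩ := FS_coe_aux _ _ hmem a rfl
    have h2 : (p : ℕ) ∈ C i := ha hp
    rwa [hpm] at h2
  -- build block boundaries
  -- h n = (start, end) of block n
  let g : ℕ → ℕ × ℕ := fun n => Nat.rec (0, 1)
    (fun _ p => (p.2, p.2 + (∑ k ∈ Finset.Ico p.1 p.2, b k) + 1)) n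
  set f : ℕ → ℕ := fun n => ∑ k ∈ Finset.Ico (g n).1 (g n).2, b k with hf
  have hg : ∀ n, (g (n + 1)).1 = (g n).2 ∧ (g (n + 1)).2 = (g n).2 + f n + 1 :=
    fun n => ⟨rfl, rfl⟩
  have hlt : ∀ n, (g n).1 < (g n).2 := by
    intro n
    cases n with
    | zero => exact Nat.zero_lt_one
    | succ m =>
      rw [(hg m).1, (hg m).2]
      omega
  have hfmono : StrictMono f := by
    apply strictMono_nat_of_lt_succ
    intro n
    have h1 : f (n + 1) ≥ (g (n + 1)).2 - (g (n + 1)).1 := by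
      calc f (n + 1) = ∑ k ∈ Finset.Ico (g (n+1)).1 (g (n+1)).2, b k := rfl
        _ ≥ ∑ k ∈ Finset.Ico (g (n+1)).1 (g (n+1)).2, 1 :=
            Finset.sum_le_sum (fun k _ => hb1 k)
        _ = (g (n + 1)).2 - (g (n + 1)).1 := by
            rw [Finset.sum_const, Nat.card_Ico, smul_eq_mul, mul_one]
    rw [(hg n).1, (hg n).2] at h1
    omega
  -- monotonicity of block starts
  have hmono2 : ∀ {n m : ℕ}, n < m → (g n).2 ≤ (g m).1 := by
    intro n m hnm
    induction m with
    | zero => omega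
    | succ k ih =>
      rw [(hg k).1]
      rcases Nat.lt_or_ge n k with h | h
      · exact le_trans (ih h) (le_of_lt (hlt k))
      · have : n = k := by omega
        subst this
        exact le_rfl
  refine ⟨i, f, hfmono, ?_⟩
  rintro x ⟨F, hF, rfl⟩
  have hdisjblocks : (F : Set ℕ).PairwiseDisjoint
      (fun n => Finset.Ico (g n).1 (g n).2) := by
    intro n _ m _ hnm
    apply Finset.disjoint_left.mpr
    intro k hk1 hk2
    simp only [Finset.mem_Ico] at hk1 hk2
    rcases Nat.lt_or_ge n m with h | h
    · have := hmono2 h; omega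
    · have : m < n := by omega
      have := hmono2 this; omega
  rw [show (∑ k ∈ F, f k) = ∑ k ∈ F.biUnion (fun n => Finset.Ico (g n).1 (g n).2), b k from
    (Finset.sum_biUnion hdisjblocks).symm]
  apply hsum
  obtain ⟨n, hn⟩ := hF
  exact ⟨(g n).1, Finset.mem_biUnion.mpr ⟨n, hn, Finset.mem_Ico.mpr ⟨le_rfl, hlt n⟩⟩⟩
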